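/- Let α > 1 and b > 0 be reals and let x* = (b/(α−1))^(1/α). Let D be a finite set with loads ℓ(d) > 0, and suppose the set D_s = {d ∈ D : ℓ(d) < x*} is nonempty. Let P be a partition of D such that: (1) every d ∈ D with ℓ(d) ≥ x* forms a singleton part {d}; (2) every other nonempty part is contained in D_s and has load at most x*; and (3) at most one nonempty part has load strictly less than x*/2. Then for every partition P′ of D, Σ_{A ∈ P, A ≠ ∅} (ℓ(A)^α + b) ≤ (1 − (1/α)·(1 − 2^(−α))) · (2 + x*/ℓ(D_s)) · Σ_{A ∈ P′, A ≠ ∅} (ℓ(A)^α + b). (This is the competitive-ratio guarantee of the online algorithm for (·,·)-VMA and for (C,·)-VMA with x* < C: any assignment satisfying the algorithm's invariant is within factor (1 − (1/α)(1 − 2^(−α)))·(2 + x*/ℓ(D_s)) of the optimum.) -/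

import Mathlib

open Real

lemma bern2 (t : ℝ) : 1 + t * Real.log 2 ≤ (2:ℝ) ^ t := by
  rw [Real.rpow_def_of_pos two_pos]
  have := Real.add_one_le_exp (Real.log 2 * t)
  linarith

lemma twoSubLe {α : ℝ} (hα : 1 ≤ α) : (2:ℝ) - α ≤ (2:ℝ) ^ (1 - α) := by
  have h := bern2 (1 - α)
  have hl : Real.log 2 < 0.6931471808 := Real.log_two_lt_d9
  nlinarith [Real.log_pos one_lt_two]

lemma tangent' {α : ℝ} (hα : 1 < α) {x y : ℝ} (hx : 0 < x) (hy : 0 ≤ y) :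
    x ^ α + α * x ^ (α - 1) * (y - x) ≤ y ^ α := by
  have hs : -1 ≤ (y - x) / x := by
    rw [le_div_iff₀ hx]; linarith
  have h := one_add_mul_self_le_rpow_one_add hs hα.le
  have h1 : 1 + (y - x) / x = y / x := by field_simp; ring
  rw [h1, Real.div_rpow hy hx.le] at h
  have hxa : (0:ℝ) < x ^ α := Real.rpow_pos_of_pos hx _
  rw [le_div_iff₀ hxa] at h
  have h2 : x ^ (α - 1) * x = x ^ α := by
    rw [← Real.rpow_add_one hx.ne' (α-1)]; ring_nf
  calc x ^ α + α * x ^ (α - 1) * (y - x)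
      = (1 + α * ((y - x) / x)) * x ^ α := by
        rw [← h2]; field_simp
    _ ≤ y ^ α := h

lemma hu'' {α xstar : ℝ} (hx0 : 0 < xstar) : xstar ^ (α-1) * xstar = xstar ^ α := by
  rw [← Real.rpow_add_one hx0.ne' (α-1)]; ring_nf

section
variable {α b xstar : ℝ}

lemma lin_lb' (hα : 1 < α) (hx0 : 0 < xstar) (hbv : b = (α-1) * xstar ^ α)
    {y : ℝ} (hy : 0 ≤ y) : α * xstar ^ (α-1) * y ≤ y ^ α + b := by
  have h := tangent' hα hx0 hy
  have hu := hu'' (α := α) hx0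
  nlinarith

lemma conv_gap' (hα : 1 < α) (hx0 : 0 < xstar) {B S : ℝ} (hB : xstar ≤ B) (hS : 0 ≤ S) :
    B ^ α + α * xstar ^ (α-1) * S ≤ (B + S) ^ α := by
  have h := tangent' hα (lt_of_lt_of_le hx0 hB) (by linarith : (0:ℝ) ≤ B + S)
  have hm : xstar ^ (α-1) ≤ B ^ (α-1) := Real.rpow_le_rpow hx0.le hB (by linarith)
  nlinarith [mul_le_mul_of_nonneg_right hm hS]

lemma superadd' (hα : 1 < α) (hx0 : 0 < xstar) (hbv : b = (α-1) * xstar ^ α)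
    {x y : ℝ} (hx : xstar ≤ x) (hy : xstar ≤ y) :
    x ^ α + y ^ α + b ≤ (x + y) ^ α := by
  have key : ∀ u v : ℝ, xstar ≤ u → xstar ≤ v → v ≤ u → u ^ α + v ^ α + b ≤ (u + v) ^ α := by
    intro u v hu hv hvu
    have hupos : 0 < u := lt_of_lt_of_le hx0 hu
    have hvpos : 0 < v := lt_of_lt_of_le hx0 hv
    have h := tangent' hα hupos (by linarith : (0:ℝ) ≤ u + v)
    have h1 : v ^ (α-1) ≤ u ^ (α-1) := Real.rpow_le_rpow hvpos.le hvu (by linarith)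
    have h2 : v ^ (α-1) * v = v ^ α := by rw [← Real.rpow_add_one hvpos.ne' (α-1)]; ring_nf
    have h3 : xstar ^ (α-1) ≤ u ^ (α-1) := Real.rpow_le_rpow hx0.le (le_trans hv hvu) (by linarith)
    have hu4 := hu'' (α := α) hx0
    have h5 : xstar ^ α ≤ u ^ (α-1) * v := by
      calc xstar ^ α = xstar ^ (α-1) * xstar := hu4.symm
        _ ≤ u ^ (α-1) * v := by
            apply mul_le_mul h3 hv hx0.le (le_trans (Real.rpow_nonneg hx0.le _) h3)
    have h6 : v ^ α ≤ u ^ (α-1) * v := by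
      rw [← h2]; exact mul_le_mul_of_nonneg_right h1 hvpos.le
    nlinarith [mul_le_mul_of_nonneg_left h5 (by linarith : (0:ℝ) ≤ α - 1)]
  rcases le_total y x with h | h
  · exact key x y hx hy h
  · have := key y x hy hx h; rw [add_comm x y]; linarith

lemma small_ub' (hα : 1 < α) (hx0 : 0 < xstar) (hbv : b = (α-1) * xstar ^ α)
    {x : ℝ} (hx1 : xstar/2 ≤ x) (hx2 : x ≤ xstar) :
    x ^ α + b ≤ 2 * (α - 1 + 2 ^ (-α)) * xstar ^ (α-1) * x := by
  have hhalf0 : (xstar/2) ^ α = (2:ℝ) ^ (-α) * xstar ^ α := by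
    rw [Real.div_rpow hx0.le (by norm_num : (0:ℝ) ≤ 2), Real.rpow_neg (by norm_num : (0:ℝ) ≤ 2)]
    have h2a : (0:ℝ) < (2:ℝ) ^ α := Real.rpow_pos_of_pos two_pos _
    field_simp
  have h2E0 : (2:ℝ) ^ (1-α) = 2 * (2:ℝ) ^ (-α) := by
    rw [show (1:ℝ) - α = -α + 1 by ring, Real.rpow_add_one (by norm_num : (2:ℝ) ≠ 0), mul_comm]
  set E : ℝ := (2:ℝ) ^ (-α) with hE
  have hEpos : 0 < E := Real.rpow_pos_of_pos two_pos _
  have hhalf : (xstar/2) ^ α = E * xstar ^ α := hhalf0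
  have hts : (2:ℝ) - α ≤ 2 * E := by rw [← h2E0]; exact twoSubLe hα.le
  have hu := hu'' (α := α) hx0
  set v : ℝ := xstar ^ α with hv
  have hvpos : 0 < v := Real.rpow_pos_of_pos hx0 _
  set t : ℝ := (2*x - xstar)/xstar with ht
  have ht0 : 0 ≤ t := by
    apply div_nonneg _ hx0.le; linarith
  have ht1 : t ≤ 1 := by
    rw [ht, div_le_one hx0]; linarith
  have hx_expr : x = (1-t)*(xstar/2) + t*xstar := by
    rw [ht]
    field_simp
    ring
  have hconv := (convexOn_rpow hα.le).2 (Set.mem_Ici.mpr (by linarith : (0:ℝ) ≤ xstar/2))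
      (Set.mem_Ici.mpr hx0.le) (by linarith : (0:ℝ) ≤ 1 - t) ht0 (by ring)
  simp only [smul_eq_mul] at hconv
  rw [← hx_expr, hhalf] at hconv
  have hux : xstar ^ (α-1) * x = ((1+t)/2)*v := by
    calc xstar ^ (α-1) * x = ((1-t)/2 + t)*(xstar ^ (α-1) * xstar) := by rw [hx_expr]; ring
      _ = ((1+t)/2)*v := by rw [hu]; ring
  have hkey : 0 ≤ t * v * (2*E + α - 2) :=
    mul_nonneg (mul_nonneg ht0 hvpos.le) (by linarith)
  have hrhs : 2 * (α - 1 + E) * xstar ^ (α-1) * x = (α-1+E)*(1+t)*v := by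
    calc 2 * (α - 1 + E) * xstar ^ (α-1) * x = 2*(α-1+E) * (xstar ^ (α-1) * x) := by ring
      _ = (α-1+E)*(1+t)*v := by rw [hux]; ring
  rw [hrhs, hbv]
  nlinarith [hconv, hkey]

lemma rho_half' (hα : 1 < α) : 1 ≤ 2 * (1 - (1/α) * (1 - (2:ℝ) ^ (-α))) := by
  have hts := twoSubLe hα.le
  have h2E : (2:ℝ) ^ (1-α) = 2 * (2:ℝ) ^ (-α) := by
    rw [show (1:ℝ) - α = -α + 1 by ring, Real.rpow_add_one (by norm_num : (2:ℝ) ≠ 0), mul_comm]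
  rw [h2E] at hts
  have hα0 : (0:ℝ) < α := by linarith
  have key : (1/α) * (1 - (2:ℝ) ^ (-α)) ≤ 1/2 := by
    rw [div_mul_eq_mul_div, div_le_div_iff₀ hα0 two_pos]
    linarith

  linarith

end

lemma sum_superadd {ι : Type*} {α b xstar : ℝ} (hα : 1 < α) (hx0 : 0 < xstar)
    (hbv : b = (α-1) * xstar ^ α) (ℓ : ι → ℝ) (T : Finset ι) (hT : T.Nonempty)
    (hbig : ∀ d ∈ T, xstar ≤ ℓ d) :
    ∑ d ∈ T, (ℓ d ^ α + b) ≤ (∑ d ∈ T, ℓ d) ^ α + b := by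
  induction hT using Finset.Nonempty.cons_induction with
  | singleton a => simp
  | cons a s ha hs ih =>
    rw [Finset.sum_cons, Finset.sum_cons]
    have hbig' : ∀ d ∈ s, xstar ≤ ℓ d := fun d hd => hbig d (Finset.mem_cons_of_mem hd)
    have ih' := ih hbig'
    have hS : xstar ≤ ∑ d ∈ s, ℓ d := by
      obtain ⟨d0, hd0⟩ := hs
      calc xstar ≤ ℓ d0 := hbig' d0 hd0
        _ ≤ ∑ d ∈ s, ℓ d := Finset.single_le_sum
            (fun d hd => le_trans (by linarith : (0:ℝ) ≤ xstar) (hbig' d hd)) hd0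
    have ha' : xstar ≤ ℓ a := hbig a (Finset.mem_cons_self a s)
    have := superadd' hα hx0 hbv ha' hS
    linarith

/-- Competitive-ratio guarantee of the online algorithm for
(·,·)-VMA and (C,·)-VMA with x* < C. Let x* = (b/(α−1))^(1/α), and suppose
D_s = {d ∈ D : ℓ(d) < x*} is nonempty. Let A be a partition of D such that:
(1) every VM of load ≥ x* is in a singleton part; (2) every other nonempty part
is contained in D_s and has load at most x*; (3) at most one nonempty part has
load strictly below x*/2. Then for every partition A' of D, the power of A is at
most (1 − (1/α)(1 − 2^(−α)))·(2 + x*/ℓ(D_s)) times the power of A'. -/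
theorem stmt17 {ι : Type*} [DecidableEq ι] (α b : ℝ) (hα : 1 < α) (hb : 0 < b)
    (D : Finset ι) (ℓ : ι → ℝ) (hℓ : ∀ d ∈ D, 0 < ℓ d)
    (xstar : ℝ) (hxstar : xstar = (b / (α - 1)) ^ (1 / α))
    (Ds : Finset ι) (hDs : Ds = D.filter (fun d => ℓ d < xstar))
    (hDsne : Ds.Nonempty)
    (m : ℕ) (A : Fin m → Finset ι)
    (hdisj : ∀ i j, i ≠ j → Disjoint (A i) (A j))
    (hcover : ∀ d ∈ D, ∃ i, d ∈ A i) (hsub : ∀ i, A i ⊆ D)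
    (h1 : ∀ i, ∀ d ∈ A i, xstar ≤ ℓ d → A i = {d})
    (h2 : ∀ i, (A i).Nonempty →
      (∃ d, A i = {d} ∧ xstar ≤ ℓ d) ∨ (A i ⊆ Ds ∧ ∑ d ∈ A i, ℓ d ≤ xstar))
    (h3 : ∀ i j, (A i).Nonempty → (A j).Nonempty →
      (∑ d ∈ A i, ℓ d) < xstar / 2 → (∑ d ∈ A j, ℓ d) < xstar / 2 → i = j)
    (m' : ℕ) (A' : Fin m' → Finset ι)
    (hdisj' : ∀ i j, i ≠ j → Disjoint (A' i) (A' j))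
    (hcover' : ∀ d ∈ D, ∃ i, d ∈ A' i) (hsub' : ∀ i, A' i ⊆ D) :
    ∑ i ∈ Finset.univ.filter (fun i => (A i).Nonempty), ((∑ d ∈ A i, ℓ d) ^ α + b) ≤
      (1 - (1 / α) * (1 - (2 : ℝ) ^ (-α))) * (2 + xstar / ∑ d ∈ Ds, ℓ d) *
        ∑ i ∈ Finset.univ.filter (fun i => (A' i).Nonempty),
          ((∑ d ∈ A' i, ℓ d) ^ α + b) := by
  classical
  have hα0 : (0:ℝ) < α := by linarith
  have hα1 : (0:ℝ) < α - 1 := by linarith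
  have hx0 : 0 < xstar := by
    rw [hxstar]; exact Real.rpow_pos_of_pos (div_pos hb hα1) _
  have hxa : xstar ^ α = b / (α - 1) := by
    rw [hxstar, ← Real.rpow_mul (div_pos hb hα1).le, one_div_mul_cancel hα0.ne',
      Real.rpow_one]
  have hbv : b = (α - 1) * xstar ^ α := by rw [hxa]; field_simp
  set E : ℝ := (2:ℝ) ^ (-α) with hE
  have hEpos : 0 < E := Real.rpow_pos_of_pos two_pos _
  have hhalf : (xstar/2) ^ α = E * xstar ^ α := by
    rw [Real.div_rpow hx0.le (by norm_num : (0:ℝ) ≤ 2), hE,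
      Real.rpow_neg (by norm_num : (0:ℝ) ≤ 2)]
    have h2a : (0:ℝ) < (2:ℝ) ^ α := Real.rpow_pos_of_pos two_pos _
    field_simp
  have hu : xstar ^ (α-1) * xstar = xstar ^ α := by
    rw [← Real.rpow_add_one hx0.ne' (α-1)]; ring_nf
  have hupos : 0 < xstar ^ (α-1) := Real.rpow_pos_of_pos hx0 _
  set c : ℝ := α * xstar ^ (α-1) with hc
  have hcpos : 0 < c := mul_pos hα0 hupos
  have hℓDs : ∀ d ∈ Ds, 0 < ℓ d := by
    intro d hd
    rw [hDs] at hd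
    exact hℓ d (Finset.mem_filter.mp hd).1
  set W : ℝ := ∑ d ∈ Ds, ℓ d with hW
  have hWpos : 0 < W := Finset.sum_pos hℓDs hDsne
  -- the big VMs
  set Dbig := D.filter (fun d => xstar ≤ ℓ d) with hDbig
  set B : ℝ := ∑ d ∈ Dbig, (ℓ d ^ α + b) with hB
  have hBnn : 0 ≤ B := Finset.sum_nonneg fun d _ =>
    add_nonneg (Real.rpow_nonneg (hℓ d (Finset.mem_filter.mp ‹d ∈ Dbig›).1).le _) hb.le
  ------------------------------------------------------------------
  -- LOWER BOUND on OPT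
  ------------------------------------------------------------------
  set g : ι → ℝ := fun d => if xstar ≤ ℓ d then ℓ d ^ α + b else c * ℓ d with hg
  have hsum' : ∑ i : Fin m', ∑ d ∈ A' i, g d = ∑ d ∈ D, g d := by
    have hbiU : Finset.univ.biUnion A' = D := by
      ext d
      simp only [Finset.mem_biUnion, Finset.mem_univ, true_and]
      exact ⟨fun ⟨i, hi⟩ => hsub' i hi, hcover' d⟩
    rw [← hbiU, Finset.sum_biUnion (fun i _ j _ hij => hdisj' i j hij)]
  have hgD : ∑ d ∈ D, g d = B + c * W := by
    rw [hg, Finset.sum_ite]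
    congr 1
    · have hfe : D.filter (fun d => ¬ xstar ≤ ℓ d) = Ds := by
        rw [hDs]; ext d; simp [not_le]
      rw [hfe, hW, Finset.mul_sum]
  have hperpart : ∀ i : Fin m', (A' i).Nonempty →
      ∑ d ∈ A' i, g d ≤ (∑ d ∈ A' i, ℓ d) ^ α + b := by
    intro i hi
    set T := (A' i).filter (fun d => xstar ≤ ℓ d) with hT
    set Tc := (A' i).filter (fun d => ¬ xstar ≤ ℓ d) with hTc
    have hsplitg : ∑ d ∈ A' i, g d = ∑ d ∈ T, (ℓ d ^ α + b) + c * ∑ d ∈ Tc, ℓ d := by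
      rw [hg, Finset.sum_ite, Finset.mul_sum]
    have hsplitL : ∑ d ∈ A' i, ℓ d = ∑ d ∈ T, ℓ d + ∑ d ∈ Tc, ℓ d :=
      (Finset.sum_filter_add_sum_filter_not _ _ _).symm
    have hTc_nn : 0 ≤ ∑ d ∈ Tc, ℓ d := Finset.sum_nonneg fun d hd =>
      (hℓ d (hsub' i ((Finset.filter_subset _ _) hd))).le
    by_cases hTne : T.Nonempty
    · have hbigT : ∀ d ∈ T, xstar ≤ ℓ d := fun d hd => (Finset.mem_filter.mp hd).2
      have hBi : xstar ≤ ∑ d ∈ T, ℓ d := by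
        obtain ⟨d0, hd0⟩ := hTne
        calc xstar ≤ ℓ d0 := hbigT d0 hd0
          _ ≤ ∑ d ∈ T, ℓ d := Finset.single_le_sum
              (fun d hd => (le_trans hx0.le (hbigT d hd))) hd0
      have hs1 := sum_superadd hα hx0 hbv ℓ T hTne hbigT
      have hs2 := conv_gap' hα hx0 hBi hTc_nn
      rw [hsplitg, hsplitL]
      rw [hc]
      linarith
    · have hTzero : T = ∅ := Finset.not_nonempty_iff_eq_empty.mp hTne
      have hy : 0 ≤ ∑ d ∈ Tc, ℓ d := hTc_nn
      have := lin_lb' hα hx0 hbv hy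
      rw [hsplitg, hsplitL, hTzero]
      simp only [Finset.sum_empty, zero_add]
      rw [hc]
      linarith
  have hOPT : B + c * W ≤
      ∑ i ∈ Finset.univ.filter (fun i => (A' i).Nonempty), ((∑ d ∈ A' i, ℓ d) ^ α + b) := by
    calc B + c * W = ∑ i : Fin m', ∑ d ∈ A' i, g d := by rw [hsum', hgD]
      _ = ∑ i ∈ Finset.univ.filter (fun i => (A' i).Nonempty), ∑ d ∈ A' i, g d := by
          symm
          apply Finset.sum_subset (Finset.filter_subset _ _)
          intro i _ hi
          have : A' i = ∅ := by
            by_contra hne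
            exact hi (Finset.mem_filter.mpr ⟨Finset.mem_univ i,
              Finset.nonempty_iff_ne_empty.mpr hne⟩)
          rw [this, Finset.sum_empty]
      _ ≤ _ := Finset.sum_le_sum fun i hi =>
          hperpart i (Finset.mem_filter.mp hi).2
  ------------------------------------------------------------------
  -- UPPER BOUND on ALG
  ------------------------------------------------------------------
  set NE := Finset.univ.filter (fun i : Fin m => (A i).Nonempty) with hNE
  set Ibig := Finset.univ.filter (fun i : Fin m => ∃ d, A i = {d} ∧ xstar ≤ ℓ d) with hIbig
  have hIbigNE : Ibig ⊆ NE := by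
    intro i hi
    obtain ⟨d, hd, _⟩ := (Finset.mem_filter.mp hi).2
    exact Finset.mem_filter.mpr ⟨Finset.mem_univ i, by rw [hd]; exact ⟨d, Finset.mem_singleton_self d⟩⟩
  -- big part sum equals B
  have hBsum : ∑ i ∈ Ibig, ((∑ d ∈ A i, ℓ d) ^ α + b) = B := by
    set gb : ι → ℝ := fun d => if xstar ≤ ℓ d then ℓ d ^ α + b else 0 with hgb
    have hsumA : ∑ i : Fin m, ∑ d ∈ A i, gb d = ∑ d ∈ D, gb d := by
      have hbiU : Finset.univ.biUnion A = D := by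
        ext d
        simp only [Finset.mem_biUnion, Finset.mem_univ, true_and]
        exact ⟨fun ⟨i, hi⟩ => hsub i hi, hcover d⟩
      rw [← hbiU, Finset.sum_biUnion (fun i _ j _ hij => hdisj i j hij)]
    have htb : ∀ i : Fin m, ∑ d ∈ A i, gb d
        = if i ∈ Ibig then (∑ d ∈ A i, ℓ d) ^ α + b else 0 := by
      intro i
      by_cases hi : i ∈ Ibig
      · obtain ⟨d, hd, hdb⟩ := (Finset.mem_filter.mp hi).2
        rw [if_pos hi, hd]
        simp [hgb, hdb]
      · rw [if_neg hi]
        apply Finset.sum_eq_zero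
        intro d hd
        rw [hgb]
        simp only
        rw [if_neg]
        intro hge
        exact hi (Finset.mem_filter.mpr ⟨Finset.mem_univ i, ⟨d, h1 i d hd hge, hge⟩⟩)
    have : ∑ i : Fin m, ∑ d ∈ A i, gb d
        = ∑ i ∈ Ibig, ((∑ d ∈ A i, ℓ d) ^ α + b) := by
      rw [Finset.sum_congr rfl (fun i _ => htb i), Finset.sum_ite_mem,
        Finset.univ_inter]
    rw [← this, hsumA, hgb, hB, Finset.sum_ite, Finset.sum_const_zero, add_zero, hDbig]
  -- small parts
  set Ismall := NE \ Ibig with hIsmall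
  have hsf : ∀ i ∈ Ismall, (A i).Nonempty ∧ A i ⊆ Ds ∧ (∑ d ∈ A i, ℓ d ≤ xstar)
      ∧ 0 < ∑ d ∈ A i, ℓ d := by
    intro i hi
    obtain ⟨hiNE, hinb⟩ := Finset.mem_sdiff.mp hi
    have hne : (A i).Nonempty := (Finset.mem_filter.mp hiNE).2
    rcases h2 i hne with h | ⟨hds, hle⟩
    · exact absurd (Finset.mem_filter.mpr ⟨Finset.mem_univ i, h⟩) hinb
    · refine ⟨hne, hds, hle, Finset.sum_pos (fun d hd => hℓDs d (hds hd)) hne⟩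
  set Iexc := Ismall.filter (fun i => ∑ d ∈ A i, ℓ d < xstar/2) with hIexc
  set Igood := Ismall.filter (fun i => ¬ (∑ d ∈ A i, ℓ d < xstar/2)) with hIgood
  have hsplit2 : ∑ i ∈ Ismall, ((∑ d ∈ A i, ℓ d) ^ α + b)
      = ∑ i ∈ Iexc, ((∑ d ∈ A i, ℓ d) ^ α + b) + ∑ i ∈ Igood, ((∑ d ∈ A i, ℓ d) ^ α + b) :=
    (Finset.sum_filter_add_sum_filter_not _ _ _).symm
  -- exceptional part
  have hexc_bound : ∑ i ∈ Iexc, ((∑ d ∈ A i, ℓ d) ^ α + b) ≤ (xstar/2) ^ α + b := by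
    have hcard : Iexc.card ≤ 1 := by
      rw [Finset.card_le_one]
      intro i hi j hj
      obtain ⟨hi1, hi2⟩ := Finset.mem_filter.mp hi
      obtain ⟨hj1, hj2⟩ := Finset.mem_filter.mp hj
      exact h3 i j (hsf i hi1).1 (hsf j hj1).1 hi2 hj2
    have hterm : ∀ i ∈ Iexc, (∑ d ∈ A i, ℓ d) ^ α + b ≤ (xstar/2) ^ α + b := by
      intro i hi
      obtain ⟨hi1, hi2⟩ := Finset.mem_filter.mp hi
      have := (hsf i hi1).2.2.2
      have : (∑ d ∈ A i, ℓ d) ^ α ≤ (xstar/2) ^ α :=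
        Real.rpow_le_rpow (by linarith) hi2.le hα0.le
      linarith
    calc ∑ i ∈ Iexc, ((∑ d ∈ A i, ℓ d) ^ α + b)
        ≤ Iexc.card • ((xstar/2) ^ α + b) := Finset.sum_le_card_nsmul _ _ _ hterm
      _ = (Iexc.card : ℝ) * ((xstar/2) ^ α + b) := by rw [nsmul_eq_mul]
      _ ≤ 1 * ((xstar/2) ^ α + b) := by
          apply mul_le_mul_of_nonneg_right _ (by positivity)
          exact_mod_cast hcard
      _ = (xstar/2) ^ α + b := one_mul _
  -- good parts
  have hgood_bound : ∑ i ∈ Igood, ((∑ d ∈ A i, ℓ d) ^ α + b)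
      ≤ 2 * (α - 1 + E) * xstar ^ (α-1) * W := by
    have hterm : ∀ i ∈ Igood, (∑ d ∈ A i, ℓ d) ^ α + b
        ≤ 2 * (α - 1 + E) * xstar ^ (α-1) * (∑ d ∈ A i, ℓ d) := by
      intro i hi
      obtain ⟨hi1, hi2⟩ := Finset.mem_filter.mp hi
      exact small_ub' hα hx0 hbv (not_lt.mp hi2) (hsf i hi1).2.2.1
    calc ∑ i ∈ Igood, ((∑ d ∈ A i, ℓ d) ^ α + b)
        ≤ ∑ i ∈ Igood, 2 * (α - 1 + E) * xstar ^ (α-1) * (∑ d ∈ A i, ℓ d) :=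
          Finset.sum_le_sum hterm
      _ = 2 * (α - 1 + E) * xstar ^ (α-1) * ∑ i ∈ Igood, ∑ d ∈ A i, ℓ d := by
          rw [Finset.mul_sum]
      _ ≤ 2 * (α - 1 + E) * xstar ^ (α-1) * W := by
          apply mul_le_mul_of_nonneg_left _ (by positivity)
          have hdisjG : (↑Igood : Set (Fin m)).PairwiseDisjoint A :=
            fun i _ j _ hij => hdisj i j hij
          rw [← Finset.sum_biUnion hdisjG, hW]
          apply Finset.sum_le_sum_of_subset_of_nonneg
          · intro d hd
            obtain ⟨i, hi, hdi⟩ := Finset.mem_biUnion.mp hd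
            exact (hsf i (Finset.mem_filter.mp hi).1).2.1 hdi
          · intro d hd _
            exact (hℓDs d hd).le
  ------------------------------------------------------------------
  -- FINAL COMBINATION
  ------------------------------------------------------------------
  set K : ℝ := (1 - (1 / α) * (1 - E)) * (2 + xstar / W) with hK
  have hrho := rho_half' hα
  have hK1 : 1 ≤ K := by
    have hxw : 0 < xstar / W := div_pos hx0 hWpos
    have hrhonn : 0 ≤ 1 - (1 / α) * (1 - E) := by linarith
    nlinarith
  have hKid : K * (c * W) = 2 * (α - 1 + E) * xstar ^ (α-1) * W + ((xstar/2) ^ α + b) := by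
    have e1 : (1 - (1/α) * (1 - E)) * α = α - 1 + E := by field_simp; ring
    have e2 : (2 + xstar/W) * W = 2 * W + xstar := by field_simp
    calc K * (c * W)
        = ((1 - (1/α) * (1 - E)) * α) * (((2 + xstar/W) * W) * xstar ^ (α-1)) := by
          rw [hK, hc]; ring
      _ = (α - 1 + E) * ((2 * W + xstar) * xstar ^ (α-1)) := by rw [e1, e2]
      _ = 2 * (α - 1 + E) * xstar ^ (α-1) * W + (α - 1 + E) * (xstar ^ (α-1) * xstar) := by
          ring
      _ = 2 * (α - 1 + E) * xstar ^ (α-1) * W + ((xstar/2) ^ α + b) := by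
          rw [hu, hhalf, hbv]; ring
  have hALG : ∑ i ∈ NE, ((∑ d ∈ A i, ℓ d) ^ α + b) ≤ B + K * (c * W) := by
    have hsd : ∑ i ∈ NE, ((∑ d ∈ A i, ℓ d) ^ α + b)
        = ∑ i ∈ Ismall, ((∑ d ∈ A i, ℓ d) ^ α + b)
          + ∑ i ∈ Ibig, ((∑ d ∈ A i, ℓ d) ^ α + b) := (Finset.sum_sdiff hIbigNE).symm
    rw [hsd, hBsum, hKid, hsplit2]
    linarith
  have hKpos : 0 < K := lt_of_lt_of_le one_pos hK1
  calc ∑ i ∈ NE, ((∑ d ∈ A i, ℓ d) ^ α + b) ≤ B + K * (c * W) := hALG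
    _ ≤ K * (B + c * W) := by nlinarith
    _ ≤ K * ∑ i ∈ Finset.univ.filter (fun i => (A' i).Nonempty),
          ((∑ d ∈ A' i, ℓ d) ^ α + b) := mul_le_mul_of_nonneg_left hOPT hKpos.le
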